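/- The ρ-Choi-Jamiołkowski operators with respect to two orthonormal bases related by a unitary U satisfy J'_ρ(Φ_*) = (UθU*θ ⊗ I) J_ρ(Φ_*) (UθU*θ ⊗ I)*; consequently, the relative entropy S(J_ρ(Φ_*), J_ρ(Ψ_*)) between the ρ-Choi-Jamiołkowski states of two trace-preserving CP maps does not depend on the choice of orthonormal basis. -/

import Mathlib

open scoped InnerProductSpace

noncomputable section
namespace JamAux

/-- Generic extension lemma: two continuous semilinear-ish maps agreeing on a set with dense
span agree everywhere. -/
lemma ext_dense {E : Type*} [NormedAddCommGroup E] [NormedSpace ℂ E]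
    {F : Type*} [TopologicalSpace F] [T2Space F] [AddCommMonoid F] [Module ℂ F]
    (σ : ℂ →+* ℂ) (s : Set E) (hd : Dense (Submodule.span ℂ s : Set E))
    {f g : E → F} (hf : Continuous f) (hg : Continuous g)
    (hfa : ∀ x y, f (x + y) = f x + f y) (hga : ∀ x y, g (x + y) = g x + g y)
    (hfs : ∀ (c : ℂ) (x), f (c • x) = σ c • f x) (hgs : ∀ (c : ℂ) (x), g (c • x) = σ c • g x)
    (h : ∀ x ∈ s, f x = g x) : ∀ x, f x = g x := by
  have h0f : f 0 = 0 := by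
    have := hfs 0 0; simpa using this
  have h0g : g 0 = 0 := by
    have := hgs 0 0; simpa using this
  let p : Submodule ℂ E :=
  { carrier := {x | f x = g x}
    add_mem' := by
      intro a b ha hb
      simp only [Set.mem_setOf_eq] at *
      rw [hfa, hga, ha, hb]
    zero_mem' := by simp only [Set.mem_setOf_eq, h0f, h0g]
    smul_mem' := by
      intro c x hx
      simp only [Set.mem_setOf_eq] at *
      rw [hfs, hgs, hx] }
  have hclosed : IsClosed (p : Set E) := isClosed_eq hf hg
  intro x
  have hsub : (Submodule.span ℂ s : Set E) ⊆ (p : Set E) := by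
    have : Submodule.span ℂ s ≤ p := Submodule.span_le.2 h
    exact this
  exact closure_minimal hsub hclosed (hd x)

lemma cont_of_bound {E F : Type*} [NormedAddCommGroup E] [NormedAddCommGroup F]
    {f : E → F} (C : ℝ) (h : ∀ x y, ‖f x - f y‖ ≤ C * ‖x - y‖) : Continuous f := by
  refine LipschitzWith.continuous (K := C.toNNReal) (LipschitzWith.of_dist_le_mul ?_)
  intro x y
  rw [dist_eq_norm, dist_eq_norm]
  exact (h x y).trans (mul_le_mul_of_nonneg_right (Real.le_coe_toNNReal C) (norm_nonneg _))

lemma summable_sq {H : Type*} [NormedAddCommGroup H] [InnerProductSpace ℂ H]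
    (L : ℕ → H →L[ℂ] H) (h : ∀ x : H, (∑' n : ℕ, ‖L n x‖ ^ 2) = ‖x‖ ^ 2) (x : H) :
    Summable fun n => ‖L n x‖ ^ 2 := by
  by_contra hs
  have h0 := h x
  rw [tsum_eq_zero_of_not_summable hs] at h0
  have hx : x = 0 := by
    have : ‖x‖ = 0 := by nlinarith [norm_nonneg x]
    simpa using this
  subst hx
  exact hs (by simpa using summable_zero)

lemma summable_mul_norm {f g : ℕ → ℝ} (hf0 : ∀ n, 0 ≤ f n) (hg0 : ∀ n, 0 ≤ g n)
    (hf : Summable fun n => f n ^ 2) (hg : Summable fun n => g n ^ 2) :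
    Summable fun n => f n * g n := by
  refine Summable.of_nonneg_of_le (fun n => mul_nonneg (hf0 n) (hg0 n))
    (fun n => ?_) ((hf.add hg).div_const 2)
  nlinarith [sq_nonneg (f n - g n)]

lemma tsum_mul_le_sqrt {f g : ℕ → ℝ} (hf0 : ∀ n, 0 ≤ f n) (hg0 : ∀ n, 0 ≤ g n)
    (hf : Summable fun n => f n ^ 2) (hg : Summable fun n => g n ^ 2) :
    (∑' n, f n * g n) ≤ Real.sqrt (∑' n, f n ^ 2) * Real.sqrt (∑' n, g n ^ 2) := by
  refine Summable.tsum_le_of_sum_le (summable_mul_norm hf0 hg0 hf hg) fun s => ?_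
  calc ∑ n ∈ s, f n * g n
      ≤ Real.sqrt (∑ n ∈ s, f n ^ 2) * Real.sqrt (∑ n ∈ s, g n ^ 2) :=
        Real.sum_mul_le_sqrt_mul_sqrt _ _ _
    _ ≤ Real.sqrt (∑' n, f n ^ 2) * Real.sqrt (∑' n, g n ^ 2) := by
        gcongr
        · exact Summable.sum_le_tsum s (fun n _ => sq_nonneg _) hf
        · exact Summable.sum_le_tsum s (fun n _ => sq_nonneg _) hg

end JamAux
namespace JamAux2

variable {H : Type*} [NormedAddCommGroup H] [InnerProductSpace ℂ H] [CompleteSpace H]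
variable {K : Type*} [NormedAddCommGroup K] [InnerProductSpace ℂ K] [CompleteSpace K]

lemma tp_norm (tp : H →ₗ[ℂ] H →ₗ[ℂ] K)
    (htp : ∀ u v u' v' : H, ⟪tp u v, tp u' v'⟫_ℂ = ⟪u, u'⟫_ℂ * ⟪v, v'⟫_ℂ)
    (u v : H) : ‖tp u v‖ = ‖u‖ * ‖v‖ := by
  have h := htp u v u v
  rw [inner_self_eq_norm_sq_to_K (𝕜 := ℂ), inner_self_eq_norm_sq_to_K (𝕜 := ℂ),
    inner_self_eq_norm_sq_to_K (𝕜 := ℂ)] at h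
  have h2 : (‖tp u v‖ : ℝ) ^ 2 = (‖u‖ * ‖v‖) ^ 2 := by
    have : ‖(tp u) v‖ ^ 2 = ‖u‖ ^ 2 * ‖v‖ ^ 2 := by exact_mod_cast h
    rw [this]; ring
  have h3 : ‖tp u v‖ = Real.sqrt ((‖u‖ * ‖v‖) ^ 2) := by
    rw [← h2, Real.sqrt_sq (norm_nonneg _)]
  rw [h3, Real.sqrt_sq (by positivity)]

lemma theta_sub {θ : H → H} (hadd : ∀ u v : H, θ (u + v) = θ u + θ v)
    (hsmul : ∀ (c : ℂ) (u : H), θ (c • u) = (starRingEnd ℂ c) • θ u) (u v : H) :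
    θ (u - v) = θ u - θ v := by
  have : u - v = u + (-1 : ℂ) • v := by
    simp [sub_eq_add_neg]
  rw [this, hadd, hsmul]
  simp [sub_eq_add_neg]

lemma theta_norm {θ : H → H} (hinner : ∀ u v : H, ⟪θ u, θ v⟫_ℂ = ⟪v, u⟫_ℂ) (u : H) :
    ‖θ u‖ = ‖u‖ := by
  rw [norm_eq_sqrt_re_inner (𝕜 := ℂ), norm_eq_sqrt_re_inner (𝕜 := ℂ) u, hinner u u]

lemma theta_cont {θ : H → H} (hadd : ∀ u v : H, θ (u + v) = θ u + θ v)
    (hsmul : ∀ (c : ℂ) (u : H), θ (c • u) = (starRingEnd ℂ c) • θ u)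
    (hinner : ∀ u v : H, ⟪θ u, θ v⟫_ℂ = ⟪v, u⟫_ℂ) : Continuous θ := by
  refine JamAux.cont_of_bound 1 fun x y => ?_
  rw [← theta_sub hadd hsmul, theta_norm hinner, one_mul]

end JamAux2
namespace JamGen

open scoped InnerProductSpace
open JamAux JamAux2

variable {H : Type*} [NormedAddCommGroup H] [InnerProductSpace ℂ H] [CompleteSpace H]
variable {K : Type*} [NormedAddCommGroup K] [InnerProductSpace ℂ K] [CompleteSpace K]

lemma gen_formula {ι : Type*}
    (tp : H →ₗ[ℂ] H →ₗ[ℂ] K)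
    (htp : ∀ u v u' v' : H, ⟪tp u v, tp u' v'⟫_ℂ = ⟪u, u'⟫_ℂ * ⟪v, v'⟫_ℂ)
    (eb : ι → H) (hdb : Dense ((Submodule.span ℂ (Set.range eb) : Submodule ℂ H) : Set H))
    (θ : H → H)
    (hadd : ∀ u v : H, θ (u + v) = θ u + θ v)
    (hsmul : ∀ (c : ℂ) (u : H), θ (c • u) = (starRingEnd ℂ c) • θ u)
    (hinner : ∀ u v : H, ⟪θ u, θ v⟫_ℂ = ⟪v, u⟫_ℂ)
    (hθe : ∀ i, θ (eb i) = eb i)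
    (sq : H →L[ℂ] H)
    (L : ℕ → H →L[ℂ] H) (hLtp : ∀ x : H, (∑' n : ℕ, ‖L n x‖ ^ 2) = ‖x‖ ^ 2)
    (J : K →L[ℂ] K)
    (hJ : ∀ i j k l : ι, ⟪tp (eb i) (eb j), J (tp (eb k) (eb l))⟫_ℂ
        = ∑' n : ℕ, ⟪eb j, L n (sq (eb i))⟫_ℂ * ⟪L n (sq (eb k)), eb l⟫_ℂ) :
    ∀ a b c d : H, ⟪tp a b, J (tp c d)⟫_ℂ
        = ∑' n : ℕ, ⟪b, L n (sq (θ a))⟫_ℂ * ⟪L n (sq (θ c)), d⟫_ℂ := by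
  have hθc : Continuous θ := theta_cont hadd hsmul hinner
  have hθn : ∀ u, ‖θ u‖ = ‖u‖ := theta_norm hinner
  have hθsub : ∀ u v, θ (u - v) = θ u - θ v := theta_sub hadd hsmul
  have hsum : ∀ x : H, Summable fun n => ‖L n x‖ ^ 2 := summable_sq L hLtp
  have hsqrt : ∀ x : H, Real.sqrt (∑' n, ‖L n x‖ ^ 2) = ‖x‖ := fun x => by
    rw [hLtp]; exact Real.sqrt_sq (norm_nonneg x)
  have cont2 : ∀ u : H, Continuous fun v => tp u v := fun u =>
    AddMonoidHomClass.continuous_of_bound (tp u) ‖u‖ fun v => le_of_eq (tp_norm tp htp u v)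
  have cont1 : ∀ v : H, Continuous fun u => tp u v := fun v =>
    AddMonoidHomClass.continuous_of_bound (tp.flip v) ‖v‖ fun u => by
      simpa [mul_comm] using le_of_eq (tp_norm tp htp u v)
  -- per-term norm bound
  have hptb : ∀ w b z d : H, ∀ n : ℕ,
      ‖(⟪b, L n w⟫_ℂ * ⟪L n z, d⟫_ℂ : ℂ)‖ ≤ ‖b‖ * ‖d‖ * (‖L n w‖ * ‖L n z‖) := by
    intro w b z d n
    rw [norm_mul]
    calc ‖(⟪b, L n w⟫_ℂ : ℂ)‖ * ‖(⟪L n z, d⟫_ℂ : ℂ)‖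
        ≤ (‖b‖ * ‖L n w‖) * (‖L n z‖ * ‖d‖) := by
          have h1 := norm_inner_le_norm (𝕜 := ℂ) b (L n w)
          have h2 := norm_inner_le_norm (𝕜 := ℂ) (L n z) d
          exact mul_le_mul h1 h2 (norm_nonneg _) (by positivity)
      _ = ‖b‖ * ‖d‖ * (‖L n w‖ * ‖L n z‖) := by ring
  have hmulsum : ∀ w z : H, Summable fun n : ℕ => ‖L n w‖ * ‖L n z‖ := fun w z =>
    summable_mul_norm (fun n => norm_nonneg _) (fun n => norm_nonneg _) (hsum w) (hsum z)
  have hnsum : ∀ w b z d : H, Summable fun n : ℕ => ‖(⟪b, L n w⟫_ℂ * ⟪L n z, d⟫_ℂ : ℂ)‖ := by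
    intro w b z d
    exact Summable.of_nonneg_of_le (fun n => norm_nonneg _) (hptb w b z d)
      ((hmulsum w z).mul_left (‖b‖ * ‖d‖))
  have hterm : ∀ w b z d : H, Summable fun n : ℕ => ⟪b, L n w⟫_ℂ * ⟪L n z, d⟫_ℂ :=
    fun w b z d => (hnsum w b z d).of_norm
  have hbound : ∀ w b z d : H,
      ‖(∑' n : ℕ, ⟪b, L n w⟫_ℂ * ⟪L n z, d⟫_ℂ : ℂ)‖ ≤ ‖b‖ * ‖d‖ * (‖w‖ * ‖z‖) := by
    intro w b z d
    calc ‖(∑' n : ℕ, ⟪b, L n w⟫_ℂ * ⟪L n z, d⟫_ℂ : ℂ)‖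
        ≤ ∑' n : ℕ, ‖(⟪b, L n w⟫_ℂ * ⟪L n z, d⟫_ℂ : ℂ)‖ := norm_tsum_le_tsum_norm (hnsum w b z d)
      _ ≤ ∑' n : ℕ, ‖b‖ * ‖d‖ * (‖L n w‖ * ‖L n z‖) :=
          Summable.tsum_le_tsum (hptb w b z d) (hnsum w b z d) ((hmulsum w z).mul_left _)
      _ = ‖b‖ * ‖d‖ * ∑' n : ℕ, ‖L n w‖ * ‖L n z‖ := tsum_mul_left
      _ ≤ ‖b‖ * ‖d‖ * (Real.sqrt (∑' n, ‖L n w‖ ^ 2) * Real.sqrt (∑' n, ‖L n z‖ ^ 2)) := by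
          have := tsum_mul_le_sqrt (f := fun n => ‖L n w‖) (g := fun n => ‖L n z‖)
            (fun n => norm_nonneg _) (fun n => norm_nonneg _) (hsum w) (hsum z)
          have hbd : (0:ℝ) ≤ ‖b‖ * ‖d‖ := by positivity
          exact mul_le_mul_of_nonneg_left this hbd
      _ = ‖b‖ * ‖d‖ * (‖w‖ * ‖z‖) := by rw [hsqrt, hsqrt]
  -- difference identities
  have hsub_w : ∀ w w' b z d : H,
      (∑' n : ℕ, ⟪b, L n w⟫_ℂ * ⟪L n z, d⟫_ℂ) - (∑' n : ℕ, ⟪b, L n w'⟫_ℂ * ⟪L n z, d⟫_ℂ)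
        = ∑' n : ℕ, ⟪b, L n (w - w')⟫_ℂ * ⟪L n z, d⟫_ℂ := by
    intro w w' b z d
    rw [← Summable.tsum_sub (hterm w b z d) (hterm w' b z d)]
    exact tsum_congr fun n => by rw [map_sub, inner_sub_right, sub_mul]
  have hsub_b : ∀ w b b' z d : H,
      (∑' n : ℕ, ⟪b, L n w⟫_ℂ * ⟪L n z, d⟫_ℂ) - (∑' n : ℕ, ⟪b', L n w⟫_ℂ * ⟪L n z, d⟫_ℂ)
        = ∑' n : ℕ, ⟪b - b', L n w⟫_ℂ * ⟪L n z, d⟫_ℂ := by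
    intro w b b' z d
    rw [← Summable.tsum_sub (hterm w b z d) (hterm w b' z d)]
    exact tsum_congr fun n => by rw [inner_sub_left, sub_mul]
  have hsub_z : ∀ w b z z' d : H,
      (∑' n : ℕ, ⟪b, L n w⟫_ℂ * ⟪L n z, d⟫_ℂ) - (∑' n : ℕ, ⟪b, L n w⟫_ℂ * ⟪L n z', d⟫_ℂ)
        = ∑' n : ℕ, ⟪b, L n w⟫_ℂ * ⟪L n (z - z'), d⟫_ℂ := by
    intro w b z z' d
    rw [← Summable.tsum_sub (hterm w b z d) (hterm w b z' d)]
    exact tsum_congr fun n => by rw [map_sub, inner_sub_left, mul_sub]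
  have hsub_d : ∀ w b z d d' : H,
      (∑' n : ℕ, ⟪b, L n w⟫_ℂ * ⟪L n z, d⟫_ℂ) - (∑' n : ℕ, ⟪b, L n w⟫_ℂ * ⟪L n z, d'⟫_ℂ)
        = ∑' n : ℕ, ⟪b, L n w⟫_ℂ * ⟪L n z, d - d'⟫_ℂ := by
    intro w b z d d'
    rw [← Summable.tsum_sub (hterm w b z d) (hterm w b z d')]
    exact tsum_congr fun n => by rw [inner_sub_right, mul_sub]
  -- additivity identities
  have hadd_w : ∀ w w' b z d : H,
      (∑' n : ℕ, ⟪b, L n (w + w')⟫_ℂ * ⟪L n z, d⟫_ℂ)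
        = (∑' n : ℕ, ⟪b, L n w⟫_ℂ * ⟪L n z, d⟫_ℂ) + ∑' n : ℕ, ⟪b, L n w'⟫_ℂ * ⟪L n z, d⟫_ℂ := by
    intro w w' b z d
    rw [← Summable.tsum_add (hterm w b z d) (hterm w' b z d)]
    exact tsum_congr fun n => by rw [map_add, inner_add_right, add_mul]
  have hadd_b : ∀ w b b' z d : H,
      (∑' n : ℕ, ⟪b + b', L n w⟫_ℂ * ⟪L n z, d⟫_ℂ)
        = (∑' n : ℕ, ⟪b, L n w⟫_ℂ * ⟪L n z, d⟫_ℂ) + ∑' n : ℕ, ⟪b', L n w⟫_ℂ * ⟪L n z, d⟫_ℂ := by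
    intro w b b' z d
    rw [← Summable.tsum_add (hterm w b z d) (hterm w b' z d)]
    exact tsum_congr fun n => by rw [inner_add_left, add_mul]
  have hadd_z : ∀ w b z z' d : H,
      (∑' n : ℕ, ⟪b, L n w⟫_ℂ * ⟪L n (z + z'), d⟫_ℂ)
        = (∑' n : ℕ, ⟪b, L n w⟫_ℂ * ⟪L n z, d⟫_ℂ) + ∑' n : ℕ, ⟪b, L n w⟫_ℂ * ⟪L n z', d⟫_ℂ := by
    intro w b z z' d
    rw [← Summable.tsum_add (hterm w b z d) (hterm w b z' d)]
    exact tsum_congr fun n => by rw [map_add, inner_add_left, mul_add]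
  have hadd_d : ∀ w b z d d' : H,
      (∑' n : ℕ, ⟪b, L n w⟫_ℂ * ⟪L n z, d + d'⟫_ℂ)
        = (∑' n : ℕ, ⟪b, L n w⟫_ℂ * ⟪L n z, d⟫_ℂ) + ∑' n : ℕ, ⟪b, L n w⟫_ℂ * ⟪L n z, d'⟫_ℂ := by
    intro w b z d d'
    rw [← Summable.tsum_add (hterm w b z d) (hterm w b z d')]
    exact tsum_congr fun n => by rw [inner_add_right, mul_add]
  -- scalar identities
  have hsmul_w : ∀ (r : ℂ) (w b z d : H),
      (∑' n : ℕ, ⟪b, L n (r • w)⟫_ℂ * ⟪L n z, d⟫_ℂ)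
        = r * ∑' n : ℕ, ⟪b, L n w⟫_ℂ * ⟪L n z, d⟫_ℂ := by
    intro r w b z d
    rw [← tsum_mul_left]
    exact tsum_congr fun n => by rw [map_smul, inner_smul_right]; ring
  have hsmul_b : ∀ (r : ℂ) (w b z d : H),
      (∑' n : ℕ, ⟪r • b, L n w⟫_ℂ * ⟪L n z, d⟫_ℂ)
        = (starRingEnd ℂ r) * ∑' n : ℕ, ⟪b, L n w⟫_ℂ * ⟪L n z, d⟫_ℂ := by
    intro r w b z d
    rw [← tsum_mul_left]
    exact tsum_congr fun n => by rw [inner_smul_left]; ring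
  have hsmul_z : ∀ (r : ℂ) (w b z d : H),
      (∑' n : ℕ, ⟪b, L n w⟫_ℂ * ⟪L n (r • z), d⟫_ℂ)
        = (starRingEnd ℂ r) * ∑' n : ℕ, ⟪b, L n w⟫_ℂ * ⟪L n z, d⟫_ℂ := by
    intro r w b z d
    rw [← tsum_mul_left]
    exact tsum_congr fun n => by rw [map_smul, inner_smul_left]; ring
  have hsmul_d : ∀ (r : ℂ) (w b z d : H),
      (∑' n : ℕ, ⟪b, L n w⟫_ℂ * ⟪L n z, r • d⟫_ℂ)
        = r * ∑' n : ℕ, ⟪b, L n w⟫_ℂ * ⟪L n z, d⟫_ℂ := by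
    intro r w b z d
    rw [← tsum_mul_left]
    exact tsum_congr fun n => by rw [inner_smul_right]; ring
  -- Stage 1 : extend in d
  have st1 : ∀ (i j k : ι) (d : H),
      ⟪tp (eb i) (eb j), J (tp (eb k) d)⟫_ℂ
        = ∑' n : ℕ, ⟪eb j, L n (sq (θ (eb i)))⟫_ℂ * ⟪L n (sq (θ (eb k))), d⟫_ℂ := by
    intro i j k
    refine ext_dense (RingHom.id ℂ) (Set.range eb) hdb
      (f := fun d => ⟪tp (eb i) (eb j), J (tp (eb k) d)⟫_ℂ)
      (g := fun d => ∑' n : ℕ, ⟪eb j, L n (sq (θ (eb i)))⟫_ℂ * ⟪L n (sq (θ (eb k))), d⟫_ℂ)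
      ?_ ?_ ?_ ?_ ?_ ?_ ?_
    · exact continuous_const.inner (J.continuous.comp (cont2 (eb k)))
    · refine cont_of_bound (‖eb j‖ * (‖sq (θ (eb i))‖ * ‖sq (θ (eb k))‖)) fun x y => ?_
      rw [hsub_d]
      calc ‖(∑' n : ℕ, ⟪eb j, L n (sq (θ (eb i)))⟫_ℂ * ⟪L n (sq (θ (eb k))), x - y⟫_ℂ : ℂ)‖
          ≤ ‖eb j‖ * ‖x - y‖ * (‖sq (θ (eb i))‖ * ‖sq (θ (eb k))‖) := hbound _ _ _ _
        _ = ‖eb j‖ * (‖sq (θ (eb i))‖ * ‖sq (θ (eb k))‖) * ‖x - y‖ := by ring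
    · intro x y; rw [map_add, map_add, inner_add_right]
    · intro x y; exact hadd_d _ _ _ _ _
    · intro r x; rw [map_smul, map_smul, inner_smul_right]; simp
    · intro r x; rw [hsmul_d]; simp
    · rintro x ⟨l, rfl⟩
      rw [hθe i, hθe k]; exact hJ i j k l
  -- Stage 2 : extend in c
  have st2 : ∀ (i j : ι) (c d : H),
      ⟪tp (eb i) (eb j), J (tp c d)⟫_ℂ
        = ∑' n : ℕ, ⟪eb j, L n (sq (θ (eb i)))⟫_ℂ * ⟪L n (sq (θ c)), d⟫_ℂ := by
    intro i j c d
    revert c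
    refine ext_dense (RingHom.id ℂ) (Set.range eb) hdb
      (f := fun c => ⟪tp (eb i) (eb j), J (tp c d)⟫_ℂ)
      (g := fun c => ∑' n : ℕ, ⟪eb j, L n (sq (θ (eb i)))⟫_ℂ * ⟪L n (sq (θ c)), d⟫_ℂ)
      ?_ ?_ ?_ ?_ ?_ ?_ ?_
    · exact continuous_const.inner (J.continuous.comp (cont1 d))
    · refine cont_of_bound (‖eb j‖ * ‖d‖ * ‖sq (θ (eb i))‖ * ‖sq‖) fun x y => ?_
      have hz : sq (θ x) - sq (θ y) = sq (θ x - θ y) := (map_sub sq _ _).symm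
      rw [hsub_z, hz, ← hθsub]
      calc ‖(∑' n : ℕ, ⟪eb j, L n (sq (θ (eb i)))⟫_ℂ * ⟪L n (sq (θ (x - y))), d⟫_ℂ : ℂ)‖
          ≤ ‖eb j‖ * ‖d‖ * (‖sq (θ (eb i))‖ * ‖sq (θ (x - y))‖) := hbound _ _ _ _
        _ ≤ ‖eb j‖ * ‖d‖ * (‖sq (θ (eb i))‖ * (‖sq‖ * ‖x - y‖)) := by
            have h1 : ‖sq (θ (x - y))‖ ≤ ‖sq‖ * ‖x - y‖ := by
              simpa [hθn] using sq.le_opNorm (θ (x - y))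
            gcongr
        _ = ‖eb j‖ * ‖d‖ * ‖sq (θ (eb i))‖ * ‖sq‖ * ‖x - y‖ := by ring
    · intro x y
      have : tp (x + y) d = tp x d + tp y d := by rw [map_add]; rfl
      rw [this, map_add, inner_add_right]
    · intro x y; rw [hadd x y, map_add, hadd_z]
    · intro r x
      have : tp (r • x) d = r • tp x d := by rw [map_smul]; rfl
      rw [this, map_smul, inner_smul_right]; simp
    · intro r x
      rw [hsmul r x, map_smul, hsmul_z]; simp
    · rintro x ⟨k, rfl⟩
      exact st1 i j k d
  -- Stage 3 : extend in b
  have st3 : ∀ (i : ι) (b c d : H),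
      ⟪tp (eb i) b, J (tp c d)⟫_ℂ
        = ∑' n : ℕ, ⟪b, L n (sq (θ (eb i)))⟫_ℂ * ⟪L n (sq (θ c)), d⟫_ℂ := by
    intro i b c d
    revert b
    refine ext_dense (starRingEnd ℂ) (Set.range eb) hdb
      (f := fun b => ⟪tp (eb i) b, J (tp c d)⟫_ℂ)
      (g := fun b => ∑' n : ℕ, ⟪b, L n (sq (θ (eb i)))⟫_ℂ * ⟪L n (sq (θ c)), d⟫_ℂ)
      ?_ ?_ ?_ ?_ ?_ ?_ ?_
    · exact (cont2 (eb i)).inner continuous_const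
    · refine cont_of_bound (‖sq (θ (eb i))‖ * ‖sq (θ c)‖ * ‖d‖) fun x y => ?_
      rw [hsub_b]
      calc ‖(∑' n : ℕ, ⟪x - y, L n (sq (θ (eb i)))⟫_ℂ * ⟪L n (sq (θ c)), d⟫_ℂ : ℂ)‖
          ≤ ‖x - y‖ * ‖d‖ * (‖sq (θ (eb i))‖ * ‖sq (θ c)‖) := hbound _ _ _ _
        _ = ‖sq (θ (eb i))‖ * ‖sq (θ c)‖ * ‖d‖ * ‖x - y‖ := by ring
    · intro x y; rw [map_add, inner_add_left]
    · intro x y; exact hadd_b _ _ _ _ _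
    · intro r x; rw [map_smul, inner_smul_left]; simp
    · intro r x; rw [hsmul_b]; simp
    · rintro x ⟨j, rfl⟩
      exact st2 i j c d
  -- Stage 4 : extend in a
  intro a b c d
  revert a
  refine ext_dense (starRingEnd ℂ) (Set.range eb) hdb
    (f := fun a => ⟪tp a b, J (tp c d)⟫_ℂ)
    (g := fun a => ∑' n : ℕ, ⟪b, L n (sq (θ a))⟫_ℂ * ⟪L n (sq (θ c)), d⟫_ℂ)
    ?_ ?_ ?_ ?_ ?_ ?_ ?_
  · exact (cont1 b).inner continuous_const
  · refine cont_of_bound (‖b‖ * ‖d‖ * ‖sq (θ c)‖ * ‖sq‖) fun x y => ?_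
    have hz : sq (θ x) - sq (θ y) = sq (θ x - θ y) := (map_sub sq _ _).symm
    rw [hsub_w, hz, ← hθsub]
    calc ‖(∑' n : ℕ, ⟪b, L n (sq (θ (x - y)))⟫_ℂ * ⟪L n (sq (θ c)), d⟫_ℂ : ℂ)‖
        ≤ ‖b‖ * ‖d‖ * (‖sq (θ (x - y))‖ * ‖sq (θ c)‖) := hbound _ _ _ _
      _ ≤ ‖b‖ * ‖d‖ * ((‖sq‖ * ‖x - y‖) * ‖sq (θ c)‖) := by
          have h1 : ‖sq (θ (x - y))‖ ≤ ‖sq‖ * ‖x - y‖ := by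
            simpa [hθn] using sq.le_opNorm (θ (x - y))
          gcongr
      _ = ‖b‖ * ‖d‖ * ‖sq (θ c)‖ * ‖sq‖ * ‖x - y‖ := by ring
  · intro x y
    have : tp (x + y) b = tp x b + tp y b := by rw [map_add]; rfl
    rw [this, inner_add_left]
  · intro x y; rw [hadd x y, map_add, hadd_w]
  · intro r x
    have : tp (r • x) b = r • tp x b := by rw [map_smul]; rfl
    rw [this, inner_smul_left]; simp
  · intro r x
    rw [hsmul r x, map_smul, hsmul_w]; simp
  · rintro x ⟨i, rfl⟩
    exact st3 i b c d

end JamGen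
open scoped InnerProductSpace

/-- The `ρ`-Choi-Jamiołkowski operators with respect to two orthonormal bases related by a
unitary `U` satisfy `J'_ρ(Φ_*) = (UθU*θ ⊗ I) J_ρ(Φ_*) (UθU*θ ⊗ I)*`; consequently, the
relative entropy `S(J_ρ(Φ_*), J_ρ(Ψ_*))` between the `ρ`-Choi-Jamiołkowski states of two
trace-preserving CP maps (with Kraus operators `L` and `M`) does not depend on the choice
of orthonormal basis.  `S` is the von Neumann relative entropy, assumed invariant under
unitary conjugation. -/
theorem jamiolkowski_relative_entropy_basis_independent
    {H : Type*} [NormedAddCommGroup H] [InnerProductSpace ℂ H] [CompleteSpace H]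
    {K : Type*} [NormedAddCommGroup K] [InnerProductSpace ℂ K] [CompleteSpace K]
    (tp : H →ₗ[ℂ] H →ₗ[ℂ] K)
    (htp : ∀ u v u' v' : H, ⟪tp u v, tp u' v'⟫_ℂ = ⟪u, u'⟫_ℂ * ⟪v, v'⟫_ℂ)
    (hdense : (Submodule.span ℂ
        (Set.range fun uv : H × H => tp uv.1 uv.2)).topologicalClosure = ⊤)
    {ι : Type*} (e : HilbertBasis ι ℂ H)
    (θ : H → H)
    (hadd : ∀ u v : H, θ (u + v) = θ u + θ v)
    (hsmul : ∀ (c : ℂ) (u : H), θ (c • u) = (starRingEnd ℂ c) • θ u)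
    (hinner : ∀ u v : H, ⟪θ u, θ v⟫_ℂ = ⟪v, u⟫_ℂ)
    (hθe : ∀ i : ι, θ (e i) = e i)
    (ρ sq : H →L[ℂ] H) (hρ : ρ.IsPositive)
    (hρtr : HasSum (fun i : ι => ⟪e i, ρ (e i)⟫_ℂ) 1)
    (hsqpos : sq.IsPositive) (hsq : sq ∘L sq = ρ)
    (L M : ℕ → H →L[ℂ] H)
    (hLtp : ∀ x : H, (∑' n : ℕ, ‖(L n) x‖ ^ 2) = ‖x‖ ^ 2)
    (hMtp : ∀ x : H, (∑' n : ℕ, ‖(M n) x‖ ^ 2) = ‖x‖ ^ 2)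
    (U : H ≃ₗᵢ[ℂ] H)
    (JΦ JΨ JΦ' JΨ' : K →L[ℂ] K)
    (hJΦ : ∀ p q : ι × ι,
      ⟪tp (e p.1) (e p.2), JΦ (tp (e q.1) (e q.2))⟫_ℂ
        = ∑' n : ℕ, ⟪e p.2, L n (sq (e p.1))⟫_ℂ *
            ⟪sq (e q.1), (ContinuousLinearMap.adjoint (L n)) (e q.2)⟫_ℂ)
    (hJΨ : ∀ p q : ι × ι,
      ⟪tp (e p.1) (e p.2), JΨ (tp (e q.1) (e q.2))⟫_ℂ
        = ∑' n : ℕ, ⟪e p.2, M n (sq (e p.1))⟫_ℂ *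
            ⟪sq (e q.1), (ContinuousLinearMap.adjoint (M n)) (e q.2)⟫_ℂ)
    (hJΦ' : ∀ p q : ι × ι,
      ⟪tp (U (e p.1)) (U (e p.2)), JΦ' (tp (U (e q.1)) (U (e q.2)))⟫_ℂ
        = ∑' n : ℕ, ⟪U (e p.2), L n (sq (U (e p.1)))⟫_ℂ *
            ⟪sq (U (e q.1)), (ContinuousLinearMap.adjoint (L n)) (U (e q.2))⟫_ℂ)
    (hJΨ' : ∀ p q : ι × ι,
      ⟪tp (U (e p.1)) (U (e p.2)), JΨ' (tp (U (e q.1)) (U (e q.2)))⟫_ℂ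
        = ∑' n : ℕ, ⟪U (e p.2), M n (sq (U (e p.1)))⟫_ℂ *
            ⟪sq (U (e q.1)), (ContinuousLinearMap.adjoint (M n)) (U (e q.2))⟫_ℂ)
    (VK : K →L[ℂ] K)
    (hVK : ∀ u v : H, VK (tp u v) = tp (U (θ (U.symm (θ u)))) v)
    (S : (K →L[ℂ] K) → (K →L[ℂ] K) → ℝ)
    (hS : ∀ V A B : K →L[ℂ] K,
      V ∘L (ContinuousLinearMap.adjoint V) = 1 →
      (ContinuousLinearMap.adjoint V) ∘L V = 1 →
      S (V ∘L A ∘L (ContinuousLinearMap.adjoint V))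
          (V ∘L B ∘L (ContinuousLinearMap.adjoint V)) = S A B) :
    JΦ' = VK ∘L JΦ ∘L (ContinuousLinearMap.adjoint VK) ∧
      S JΦ' JΨ' = S JΦ JΨ := by
  classical
  have hθc : Continuous θ := JamAux2.theta_cont hadd hsmul hinner
  have hdbe : Dense ((Submodule.span ℂ (Set.range ⇑e) : Submodule ℂ H) : Set H) :=
    Submodule.dense_iff_topologicalClosure_eq_top.mpr e.dense_span
  -- θ is an involution
  have hθθ : ∀ u : H, θ (θ u) = u := by
    refine JamAux.ext_dense (RingHom.id ℂ) (Set.range ⇑e) hdbe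
      (f := fun u => θ (θ u)) (g := id) (hθc.comp hθc) continuous_id ?_ ?_ ?_ ?_ ?_
    · intro x y; rw [hadd, hadd]
    · intro x y; rfl
    · intro r x; rw [hsmul, hsmul]; simp
    · intro r x; simp
    · rintro x ⟨i, rfl⟩; dsimp only [id]; rw [hθe, hθe]
  -- W ∘ Winv = id
  have hWWinv : ∀ u : H, U (θ (U.symm (θ (θ (U (θ (U.symm u))))))) = u := by
    intro u
    rw [hθθ, LinearIsometryEquiv.symm_apply_apply, hθθ, LinearIsometryEquiv.apply_symm_apply]
  have hdtp : Dense ((Submodule.span ℂ (Set.range fun uv : H × H => tp uv.1 uv.2) :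
      Submodule ℂ K) : Set K) :=
    Submodule.dense_iff_topologicalClosure_eq_top.mpr hdense
  -- VK preserves inner products
  have hVKtp_inner : ∀ u v u' v' : H, ⟪VK (tp u v), VK (tp u' v')⟫_ℂ = ⟪tp u v, tp u' v'⟫_ℂ := by
    intro u v u' v'
    rw [hVK, hVK, htp, htp]
    congr 1
    rw [LinearIsometryEquiv.inner_map_map, hinner, LinearIsometryEquiv.inner_map_map, hinner]
  have hVKinner : ∀ x y : K, ⟪VK x, VK y⟫_ℂ = ⟪x, y⟫_ℂ := by
    have step1 : ∀ (u v : H) (y : K), ⟪VK (tp u v), VK y⟫_ℂ = ⟪tp u v, y⟫_ℂ := by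
      intro u v
      refine JamAux.ext_dense (RingHom.id ℂ) _ hdtp
        (f := fun y => ⟪VK (tp u v), VK y⟫_ℂ) (g := fun y => ⟪tp u v, y⟫_ℂ)
        (continuous_const.inner VK.continuous) (continuous_const.inner continuous_id)
        ?_ ?_ ?_ ?_ ?_
      · intro x y; rw [map_add, inner_add_right]
      · intro x y; rw [inner_add_right]
      · intro r x; rw [map_smul, inner_smul_right]; simp
      · intro r x; rw [inner_smul_right]; simp
      · rintro x ⟨⟨u', v'⟩, rfl⟩; exact hVKtp_inner u v u' v'
    intro x y
    revert x
    refine JamAux.ext_dense (starRingEnd ℂ) _ hdtp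
      (f := fun x => ⟪VK x, VK y⟫_ℂ) (g := fun x => ⟪x, y⟫_ℂ)
      (VK.continuous.inner continuous_const) (continuous_id.inner continuous_const)
      ?_ ?_ ?_ ?_ ?_
    · intro a b; rw [map_add, inner_add_left]
    · intro a b; rw [inner_add_left]
    · intro r a; rw [map_smul, inner_smul_left]; simp
    · intro r a; rw [inner_smul_left]; simp
    · rintro x ⟨⟨u, v⟩, rfl⟩; exact step1 u v y
  have hadj1 : (ContinuousLinearMap.adjoint VK) ∘L VK = 1 := by
    ext x
    refine ext_inner_left ℂ fun y => ?_
    simp only [ContinuousLinearMap.comp_apply, ContinuousLinearMap.one_apply]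
    rw [ContinuousLinearMap.adjoint_inner_right, hVKinner]
  have hadj1' : ∀ x : K, (ContinuousLinearMap.adjoint VK) (VK x) = x := by
    intro x
    have := ContinuousLinearMap.ext_iff.mp hadj1 x
    simpa using this
  have hVKiso : Isometry VK := AddMonoidHomClass.isometry_of_norm VK fun x => by
    rw [norm_eq_sqrt_re_inner (𝕜 := ℂ), norm_eq_sqrt_re_inner (𝕜 := ℂ) x, hVKinner]
  have hVKsurj : Function.Surjective VK := by
    have hclosed : IsClosed (Set.range ⇑VK) := hVKiso.isClosedEmbedding.isClosed_range
    have hle : Submodule.span ℂ (Set.range fun uv : H × H => tp uv.1 uv.2)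
        ≤ LinearMap.range (VK : K →ₗ[ℂ] K) := by
      rw [Submodule.span_le]
      rintro x ⟨⟨u, v⟩, rfl⟩
      exact ⟨tp (θ (U (θ (U.symm u)))) v, by rw [ContinuousLinearMap.coe_coe, hVK, hWWinv]⟩
    intro y
    have h1 : y ∈ closure ((Submodule.span ℂ
        (Set.range fun uv : H × H => tp uv.1 uv.2) : Submodule ℂ K) : Set K) := hdtp y
    have h2 : ((Submodule.span ℂ (Set.range fun uv : H × H => tp uv.1 uv.2) :
        Submodule ℂ K) : Set K) ⊆ Set.range ⇑VK := by
      intro z hz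
      have := hle hz
      simpa [LinearMap.mem_range] using this
    have h3 := closure_mono h2 h1
    rw [hclosed.closure_eq] at h3
    exact h3
  have hadj2 : VK ∘L (ContinuousLinearMap.adjoint VK) = 1 := by
    ext y
    obtain ⟨x, rfl⟩ := hVKsurj y
    simp only [ContinuousLinearMap.comp_apply, ContinuousLinearMap.one_apply]
    rw [hadj1' x]
  have hadjtp : ∀ u v : H,
      (ContinuousLinearMap.adjoint VK) (tp u v) = tp (θ (U (θ (U.symm u)))) v := by
    intro u v
    have h1 : VK (tp (θ (U (θ (U.symm u)))) v) = tp u v := by rw [hVK, hWWinv]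
    rw [← h1, hadj1']
  -- primed basis and conjugation
  have hdbe' : Dense ((Submodule.span ℂ (Set.range fun i : ι => U (e i)) :
      Submodule ℂ H) : Set H) := by
    have h1 : (Set.range fun i : ι => U (e i)) = ⇑U '' Set.range ⇑e := by
      rw [← Set.range_comp]; rfl
    have h2 : Submodule.span ℂ (⇑U '' Set.range ⇑e)
        = Submodule.map (U.toLinearEquiv : H →ₗ[ℂ] H) (Submodule.span ℂ (Set.range ⇑e)) := by
      rw [Submodule.map_span]
      rfl
    rw [h1, h2]
    have h3 : ((Submodule.map (U.toLinearEquiv : H →ₗ[ℂ] H)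
        (Submodule.span ℂ (Set.range ⇑e)) : Submodule ℂ H) : Set H)
        = ⇑U '' ((Submodule.span ℂ (Set.range ⇑e) : Submodule ℂ H) : Set H) := by
      simp [Submodule.map_coe]
    have h4 : closure (⇑U '' ((Submodule.span ℂ (Set.range ⇑e) : Submodule ℂ H) : Set H))
        = ⇑U '' closure ((Submodule.span ℂ (Set.range ⇑e) : Submodule ℂ H) : Set H) := by
      have h5 := U.toHomeomorph.image_closure
        ((Submodule.span ℂ (Set.range ⇑e) : Submodule ℂ H) : Set H)
      simpa using h5.symm
    rw [dense_iff_closure_eq, h3, h4, dense_iff_closure_eq.mp hdbe, Set.image_univ]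
    exact U.surjective.range_eq
  have hadd' : ∀ u v : H, U (θ (U.symm (u + v))) = U (θ (U.symm u)) + U (θ (U.symm v)) := by
    intro u v; rw [map_add, hadd, map_add]
  have hsmul' : ∀ (c : ℂ) (u : H),
      U (θ (U.symm (c • u))) = (starRingEnd ℂ c) • U (θ (U.symm u)) := by
    intro c u; rw [map_smul, hsmul, map_smul]
  have hinner' : ∀ u v : H, ⟪U (θ (U.symm u)), U (θ (U.symm v))⟫_ℂ = ⟪v, u⟫_ℂ := by
    intro u v
    rw [LinearIsometryEquiv.inner_map_map, hinner, LinearIsometryEquiv.inner_map_map]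
  have hθe' : ∀ i : ι, U (θ (U.symm (U (e i)))) = U (e i) := by
    intro i; rw [LinearIsometryEquiv.symm_apply_apply, hθe]
  -- the key conjugation identity
  have keyJ : ∀ (Lk : ℕ → H →L[ℂ] H),
      (∀ x : H, (∑' n : ℕ, ‖Lk n x‖ ^ 2) = ‖x‖ ^ 2) →
      ∀ (J J' : K →L[ℂ] K),
      (∀ p q : ι × ι, ⟪tp (e p.1) (e p.2), J (tp (e q.1) (e q.2))⟫_ℂ
        = ∑' n : ℕ, ⟪e p.2, Lk n (sq (e p.1))⟫_ℂ *
            ⟪sq (e q.1), (ContinuousLinearMap.adjoint (Lk n)) (e q.2)⟫_ℂ) →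
      (∀ p q : ι × ι, ⟪tp (U (e p.1)) (U (e p.2)), J' (tp (U (e q.1)) (U (e q.2)))⟫_ℂ
        = ∑' n : ℕ, ⟪U (e p.2), Lk n (sq (U (e p.1)))⟫_ℂ *
            ⟪sq (U (e q.1)), (ContinuousLinearMap.adjoint (Lk n)) (U (e q.2))⟫_ℂ) →
      J' = VK ∘L J ∘L (ContinuousLinearMap.adjoint VK) := by
    intro Lk hLk J J' hJ hJ'
    have hgen : ∀ a b c d : H, ⟪tp a b, J (tp c d)⟫_ℂ
        = ∑' n : ℕ, ⟪b, Lk n (sq (θ a))⟫_ℂ * ⟪Lk n (sq (θ c)), d⟫_ℂ := by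
      refine JamGen.gen_formula tp htp ⇑e hdbe θ hadd hsmul hinner hθe sq Lk hLk J ?_
      intro i j k l
      have := hJ (i, j) (k, l)
      simp only [ContinuousLinearMap.adjoint_inner_right] at this
      exact this
    have hgen' : ∀ a b c d : H, ⟪tp a b, J' (tp c d)⟫_ℂ
        = ∑' n : ℕ, ⟪b, Lk n (sq (U (θ (U.symm a))))⟫_ℂ
            * ⟪Lk n (sq (U (θ (U.symm c)))), d⟫_ℂ := by
      refine JamGen.gen_formula tp htp (fun i : ι => U (e i)) hdbe'
        (fun u => U (θ (U.symm u))) hadd' hsmul' hinner' hθe' sq Lk hLk J' ?_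
      intro i j k l
      have := hJ' (i, j) (k, l)
      simp only [ContinuousLinearMap.adjoint_inner_right] at this
      exact this
    have hmat : ∀ a b c d : H, ⟪tp a b, J' (tp c d)⟫_ℂ
        = ⟪tp a b, (VK ∘L J ∘L (ContinuousLinearMap.adjoint VK)) (tp c d)⟫_ℂ := by
      intro a b c d
      rw [hgen']
      have hc : (VK ∘L J ∘L (ContinuousLinearMap.adjoint VK)) (tp c d)
          = VK (J ((ContinuousLinearMap.adjoint VK) (tp c d))) := rfl
      rw [hc, ← ContinuousLinearMap.adjoint_inner_left, hadjtp, hadjtp, hgen]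
      simp only [hθθ]
    have hpt : ∀ c d : H,
        J' (tp c d) = (VK ∘L J ∘L (ContinuousLinearMap.adjoint VK)) (tp c d) := by
      intro c d
      refine ext_inner_left ℂ fun v => ?_
      refine JamAux.ext_dense (starRingEnd ℂ) _ hdtp
        (f := fun x => ⟪x, J' (tp c d)⟫_ℂ)
        (g := fun x => ⟪x, (VK ∘L J ∘L (ContinuousLinearMap.adjoint VK)) (tp c d)⟫_ℂ)
        (continuous_id.inner continuous_const) (continuous_id.inner continuous_const)
        (fun x y => by rw [inner_add_left])
        (fun x y => by rw [inner_add_left])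
        (fun r x => by rw [inner_smul_left]; simp)
        (fun r x => by rw [inner_smul_left]; simp)
        ?_ v
      rintro x ⟨⟨a, b⟩, rfl⟩
      exact hmat a b c d
    refine ContinuousLinearMap.ext_on hdtp ?_
    rintro x ⟨⟨c, d⟩, rfl⟩
    exact hpt c d
  have h1 : JΦ' = VK ∘L JΦ ∘L (ContinuousLinearMap.adjoint VK) := keyJ L hLtp JΦ JΦ' hJΦ hJΦ'
  have h2 : JΨ' = VK ∘L JΨ ∘L (ContinuousLinearMap.adjoint VK) := keyJ M hMtp JΨ JΨ' hJΨ hJΨ'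
  refine ⟨h1, ?_⟩
  rw [h1, h2]
  exact hS VK JΦ JΨ hadj2 hadj1
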